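/- For a nontrivial idempotent bounded linear operator T on a Hilbert space H (T^2 = T, T ≠ 0, T ≠ I), the operator norms satisfy ‖I - T‖ = ‖T‖. -/

import Mathlib

open scoped RealInnerProductSpace

open ContinuousLinearMap in
lemma one_le_norm_of_idem {H : Type*} [NormedAddCommGroup H]
    [InnerProductSpace ℝ H]
    (P : H →L[ℝ] H) (hP : P.comp P = P) (h0 : P ≠ 0) : 1 ≤ ‖P‖ := by
  have hpos : 0 < ‖P‖ := norm_pos_iff.mpr h0
  have h : ‖P‖ ≤ ‖P‖ * ‖P‖ := by
    calc ‖P‖ = ‖P.comp P‖ := by rw [hP]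
    _ ≤ ‖P‖ * ‖P‖ := P.opNorm_comp_le P
  nlinarith

set_option maxHeartbeats 1000000 in
open ContinuousLinearMap in
lemma key_idem {H : Type*} [NormedAddCommGroup H]
    [InnerProductSpace ℝ H]
    (P : H →L[ℝ] H) (hP : P.comp P = P) (h0 : P ≠ 0) (x : H) :
    ‖x - P x‖ ≤ ‖P‖ * ‖x‖ := by
  have hN : 1 ≤ ‖P‖ := one_le_norm_of_idem P hP h0
  set N := ‖P‖ with hNdef
  set m := P x with hm
  set n := x - P x with hn
  have hPm : P m = m := by
    have := congrArg (fun S : H →L[ℝ] H => S x) hP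
    simpa using this
  have hPn : P n = 0 := by
    simp [hn, map_sub, hPm]
    exact sub_eq_zero.mpr hPm.symm
  by_cases hb : n = 0
  · rw [hb]
    simp only [norm_zero]
    positivity
  · have hb0 : (0:ℝ) < ‖n‖ := norm_pos_iff.mpr hb
    set b := ‖n‖ with hbdef
    set a := ‖m‖ with hadef
    set c : ℝ := (inner ℝ m n : ℝ) with hcdef
    set t : ℝ := (inner ℝ x n : ℝ) / b^2 with htdef
    set y := x - t • n with hy
    have hPy : P y = m := by
      simp [hy, map_sub, map_smul, hPn]
      rfl
    have hay : a ≤ N * ‖y‖ := by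
      rw [hadef, ← hPy]
      exact P.le_opNorm y
    have hxmn : x = m + n := by simp [hn, hm]
    have hxn : (inner ℝ x n : ℝ) = c + b^2 := by
      rw [hxmn, inner_add_left, hcdef, real_inner_self_eq_norm_sq]
    have hx2 : ‖x‖^2 = a^2 + 2*c + b^2 := by
      rw [hxmn, @norm_add_sq_real]
    have hy2 : ‖y‖^2 = ‖x‖^2 - (c + b^2)^2 / b^2 := by
      rw [hy, @norm_sub_sq_real, real_inner_smul_right, norm_smul, htdef, hxn]
      rw [Real.norm_eq_abs, mul_pow, sq_abs]
      field_simp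
      ring
    have ha2 : a^2 ≤ N^2 * ‖y‖^2 := by
      have h1 : 0 ≤ a := norm_nonneg _
      have h2 : 0 ≤ N * ‖y‖ := by positivity
      nlinarith
    have hkey : N^2 * c^2 ≤ (N^2 - 1) * a^2 * b^2 := by
      rw [hy2, hx2] at ha2
      have hb2 : (0:ℝ) < b^2 := by positivity
      have := mul_le_mul_of_nonneg_right ha2 hb2.le
      field_simp at this
      nlinarith
    -- goal: b ≤ N * ‖x‖
    have hG : 0 ≤ N^2*a^2 + 2*N^2*c + (N^2-1)*b^2 := by
      rcases le_or_gt 0 c with hc | hc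
      · have h5 : 0 ≤ N^2*c := mul_nonneg (by positivity) hc
        have h6 : 0 ≤ (N^2-1)*b^2 := mul_nonneg (by nlinarith) (sq_nonneg b)
        have h7 : 0 ≤ N^2*a^2 := by positivity
        linarith
      · have hA : 0 ≤ 2*N^2*(-c) := by nlinarith
        have hB : 0 ≤ N^2*a^2 + (N^2-1)*b^2 := by
          have h6 : 0 ≤ (N^2-1)*b^2 := mul_nonneg (by nlinarith) (sq_nonneg b)
          have h7 : 0 ≤ N^2*a^2 := by positivity
          linarith
        have hsq : (2*N^2*(-c))^2 ≤ (N^2*a^2 + (N^2-1)*b^2)^2 := by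
          have h4 : 4*N^2*(N^2*c^2) ≤ 4*N^2*((N^2-1)*a^2*b^2) :=
            mul_le_mul_of_nonneg_left hkey (by positivity)
          nlinarith [h4, sq_nonneg (N^2*a^2 - (N^2-1)*b^2)]
        nlinarith [hsq, hA, hB]
    have hgoal2 : b^2 ≤ N^2 * ‖x‖^2 := by
      rw [hx2]
      nlinarith [hG]
    have h1 : (0:ℝ) ≤ N * ‖x‖ := mul_nonneg (by linarith) (norm_nonneg _)
    nlinarith [hgoal2, h1, hb0]

open ContinuousLinearMap in
lemma norm_id_sub_le {H : Type*} [NormedAddCommGroup H]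
    [InnerProductSpace ℝ H]
    (P : H →L[ℝ] H) (hP : P.comp P = P) (h0 : P ≠ 0) :
    ‖ContinuousLinearMap.id ℝ H - P‖ ≤ ‖P‖ := by
  apply ContinuousLinearMap.opNorm_le_bound _ (norm_nonneg P)
  intro x
  have := key_idem P hP h0 x
  simpa using this

theorem norm_id_sub_projection {H : Type*} [NormedAddCommGroup H]
    [InnerProductSpace ℝ H] [CompleteSpace H]
    (T : H →L[ℝ] H) (hidem : T.comp T = T)
    (h0 : T ≠ 0) (h1 : T ≠ ContinuousLinearMap.id ℝ H) :
    ‖ContinuousLinearMap.id ℝ H - T‖ = ‖T‖ := by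
  set Q := ContinuousLinearMap.id ℝ H - T with hQ
  have hQidem : Q.comp Q = Q := by
    ext x
    simp only [hQ, ContinuousLinearMap.comp_apply, ContinuousLinearMap.sub_apply,
      ContinuousLinearMap.id_apply]
    have hTT : T (T x) = T x := by
      have := congrArg (fun S : H →L[ℝ] H => S x) hidem
      simpa using this
    simp [map_sub, hTT]
  have hQ0 : Q ≠ 0 := by
    intro h
    apply h1
    have : ContinuousLinearMap.id ℝ H - T = 0 := h
    ext x
    have := congrArg (fun S : H →L[ℝ] H => S x) this
    simp only [ContinuousLinearMap.sub_apply, ContinuousLinearMap.id_apply,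
      ContinuousLinearMap.zero_apply] at this
    exact (sub_eq_zero.mp this).symm
  have hTQ : ContinuousLinearMap.id ℝ H - Q = T := by
    simp [hQ]
  have h2 : ‖Q‖ ≤ ‖T‖ := norm_id_sub_le T hidem h0
  have h3 : ‖T‖ ≤ ‖Q‖ := by
    have := norm_id_sub_le Q hQidem hQ0
    rwa [hTQ] at this
  linarith
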